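/- Let k ≥ 2 be an integer. The functions η_i(t) = (1/(2√2)) ln(1152 t) − (1/√2) ln[(i−1)(k−i+1)/2], for i = 2, …, k, satisfy, for all t > 0 and all i = 2, …, k, the system (2√2/3) η_i'(t) = 384 { −2 e^{−2√2 η_{i−1}(t)} + 4 e^{−2√2 η_i(t)} − 2 e^{−2√2 η_{i+1}(t)} − e^{−√2(η_i(t) + η_{i+1}(t))} + e^{−√2(η_{i−1}(t) + η_{i−2}(t))} − e^{−√2(η_i(t) + η_{i−1}(t))} + e^{−√2(η_{i+1}(t) + η_{i+2}(t))} }, where every term containing η_j with j ∉ {2, …, k} is replaced by 0 (corresponding to the conventions η_0 = η_1 = η_{k+1} = η_{k+2} = +∞). -/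

import Mathlib

open Real

/-- The explicit gap functions
`η_i(t) = (1/(2√2)) ln(1152 t) − (1/√2) ln[(i−1)(k−i+1)/2]`. -/
noncomputable def eta0 (k i : ℕ) (t : ℝ) : ℝ :=
  (1 / (2 * Real.sqrt 2)) * Real.log (1152 * t)
    - (1 / Real.sqrt 2) * Real.log (((i : ℝ) - 1) * ((k : ℝ) - (i : ℝ) + 1) / 2)

/-- The coefficient `(j-1)(k-j+1)/2`, set to `0` outside the valid range. -/
noncomputable def Cc (k j : ℕ) : ℝ :=
  if 2 ≤ j ∧ j ≤ k then ((j : ℝ) - 1) * ((k : ℝ) - (j : ℝ) + 1) / 2 else 0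

lemma Cc_eq (k j : ℕ) (h1 : 2 ≤ j) (h2 : j ≤ k) :
    Cc k j = ((j : ℝ) - 1) * ((k : ℝ) - (j : ℝ) + 1) / 2 := if_pos ⟨h1, h2⟩

lemma Cc_eq_zero (k j : ℕ) (h : ¬(2 ≤ j ∧ j ≤ k)) : Cc k j = 0 := if_neg h

lemma eta0_deriv (k i : ℕ) (t : ℝ) (ht : 0 < t) :
    deriv (eta0 k i) t = 1 / (2 * Real.sqrt 2 * t) := by
  have h1 : HasDerivAt (fun s : ℝ => 1152 * s) 1152 t := by
    simpa using (hasDerivAt_id t).const_mul (1152 : ℝ)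
  have h2 : HasDerivAt (fun s : ℝ => Real.log (1152 * s)) (1152 / (1152 * t)) t :=
    h1.log (by positivity)
  have h3 := (h2.const_mul (1 / (2 * Real.sqrt 2))).sub_const
    ((1 / Real.sqrt 2) * Real.log (((i : ℝ) - 1) * ((k : ℝ) - (i : ℝ) + 1) / 2))
  have h4 : HasDerivAt (eta0 k i) (1 / (2 * Real.sqrt 2) * (1152 / (1152 * t))) t := h3
  have hs0 : Real.sqrt 2 ≠ 0 := by positivity
  have ht0 : t ≠ 0 := ne_of_gt ht
  rw [h4.deriv]
  field_simp

lemma exp_eta (k j : ℕ) (t : ℝ) (ht : 0 < t) (h2j : 2 ≤ j) (hjk : j ≤ k) :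
    Real.exp (-Real.sqrt 2 * eta0 k j t) =
      (((j : ℝ) - 1) * ((k : ℝ) - (j : ℝ) + 1) / 2) / Real.sqrt (1152 * t) := by
  have hs0 : Real.sqrt 2 ≠ 0 := by positivity
  have hj1 : (1 : ℝ) ≤ (j : ℝ) - 1 := by
    have : (2 : ℝ) ≤ (j : ℝ) := by exact_mod_cast h2j
    linarith
  have hjk' : (1 : ℝ) ≤ (k : ℝ) - (j : ℝ) + 1 := by
    have : (j : ℝ) ≤ (k : ℝ) := by exact_mod_cast hjk
    linarith
  have hcpos : 0 < ((j : ℝ) - 1) * ((k : ℝ) - (j : ℝ) + 1) / 2 := by nlinarith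
  have key : -Real.sqrt 2 * eta0 k j t =
      Real.log (((j : ℝ) - 1) * ((k : ℝ) - (j : ℝ) + 1) / 2)
        + Real.log (1152 * t) * (-(1 / 2)) := by
    unfold eta0
    field_simp
    ring
  rw [key, Real.exp_add, Real.exp_log hcpos]
  have h1152 : (0 : ℝ) < 1152 * t := by positivity
  rw [← Real.rpow_def_of_pos h1152]
  rw [show (-(1/2) : ℝ) = -(1/2) from rfl, Real.rpow_neg h1152.le, ← Real.sqrt_eq_rpow]
  ring

lemma exp_eta_sq (k j : ℕ) (t : ℝ) (ht : 0 < t) (h2j : 2 ≤ j) (hjk : j ≤ k) :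
    Real.exp (-(2 * Real.sqrt 2) * eta0 k j t) = (Cc k j) ^ 2 / (1152 * t) := by
  have h : -(2 * Real.sqrt 2) * eta0 k j t =
      (-Real.sqrt 2 * eta0 k j t) + (-Real.sqrt 2 * eta0 k j t) := by ring
  rw [h, Real.exp_add, exp_eta k j t ht h2j hjk, Cc_eq k j h2j hjk,
    div_mul_div_comm, Real.mul_self_sqrt (by positivity)]
  ring

lemma exp_eta_prod (k j j' : ℕ) (t : ℝ) (ht : 0 < t) (h2j : 2 ≤ j) (hjk : j ≤ k)
    (h2j' : 2 ≤ j') (hj'k : j' ≤ k) :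
    Real.exp (-Real.sqrt 2 * (eta0 k j t + eta0 k j' t)) =
      (Cc k j) * (Cc k j') / (1152 * t) := by
  have h : -Real.sqrt 2 * (eta0 k j t + eta0 k j' t) =
      (-Real.sqrt 2 * eta0 k j t) + (-Real.sqrt 2 * eta0 k j' t) := by ring
  rw [h, Real.exp_add, exp_eta k j t ht h2j hjk, exp_eta k j' t ht h2j' hj'k,
    Cc_eq k j h2j hjk, Cc_eq k j' h2j' hj'k,
    div_mul_div_comm, Real.mul_self_sqrt (by positivity)]

lemma key_identity (k i : ℕ) (hi2 : 2 ≤ i) (hik : i ≤ k) :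
    -2 * (Cc k (i - 1)) ^ 2 + 4 * (Cc k i) ^ 2 - 2 * (Cc k (i + 1)) ^ 2
      - Cc k i * Cc k (i + 1) + Cc k (i - 1) * Cc k (i - 2)
      - Cc k i * Cc k (i - 1) + Cc k (i + 1) * Cc k (i + 2) = 1 := by
  rcases Nat.lt_or_ge i 3 with hi3 | hi3
  · -- i = 2
    have hi : i = 2 := by omega
    subst hi
    rw [show (2 - 1 : ℕ) = 1 from rfl, show (2 - 2 : ℕ) = 0 from rfl,
      Cc_eq_zero k 1 (by omega), Cc_eq_zero k 0 (by omega), Cc_eq k 2 (by omega) hik]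
    rcases Nat.lt_or_ge k 3 with hk3 | hk3
    · have : k = 2 := by omega
      subst this
      rw [Cc_eq_zero 2 3 (by omega), Cc_eq_zero 2 4 (by omega)]
      norm_num
    · rcases Nat.lt_or_ge k 4 with hk4 | hk4
      · have : k = 3 := by omega
        subst this
        rw [Cc_eq 3 3 (by omega) (by omega), Cc_eq_zero 3 4 (by omega)]
        norm_num
      · rw [Cc_eq k 3 (by omega) (by omega), Cc_eq k 4 (by omega) (by omega)]
        push_cast
        ring
  · rcases Nat.lt_or_ge i 4 with hi4 | hi4
    · -- i = 3
      have hi : i = 3 := by omega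
      subst hi
      rw [show (3 - 1 : ℕ) = 2 from rfl, show (3 - 2 : ℕ) = 1 from rfl,
        Cc_eq_zero k 1 (by omega), Cc_eq k 2 (by omega) (by omega),
        Cc_eq k 3 (by omega) hik]
      rcases Nat.lt_or_ge k 4 with hk4 | hk4
      · have : k = 3 := by omega
        subst this
        rw [Cc_eq_zero 3 4 (by omega), Cc_eq_zero 3 5 (by omega)]
        norm_num
      · rcases Nat.lt_or_ge k 5 with hk5 | hk5
        · have : k = 4 := by omega
          subst this
          rw [Cc_eq 4 4 (by omega) (by omega), Cc_eq_zero 4 5 (by omega)]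
          norm_num
        · rw [Cc_eq k 4 (by omega) (by omega), Cc_eq k 5 (by omega) (by omega)]
          push_cast
          ring
    · -- i ≥ 4
      have e1 : ((i - 1 : ℕ) : ℝ) = (i : ℝ) - 1 := by
        rw [Nat.cast_sub (by omega)]; norm_num
      have e2 : ((i - 2 : ℕ) : ℝ) = (i : ℝ) - 2 := by
        rw [Nat.cast_sub (by omega)]; norm_num
      rw [Cc_eq k (i - 1) (by omega) (by omega), Cc_eq k (i - 2) (by omega) (by omega),
        Cc_eq k i hi2 hik, e1, e2]
      rcases Nat.lt_or_ge k (i + 1) with hk1 | hk1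
      · have : k = i := by omega
        subst this
        rw [Cc_eq_zero k (k + 1) (by omega), Cc_eq_zero k (k + 2) (by omega)]
        push_cast
        ring
      · rcases Nat.lt_or_ge k (i + 2) with hk2 | hk2
        · have : k = i + 1 := by omega
          subst this
          rw [Cc_eq (i + 1) (i + 1) (by omega) (by omega),
            Cc_eq_zero (i + 1) (i + 2) (by omega)]
          push_cast
          ring
        · rw [Cc_eq k (i + 1) (by omega) (by omega), Cc_eq k (i + 2) (by omega) (by omega)]
          push_cast
          ring

/-- The explicit gaps `η_i` solve the system obtained from the Toda system by taking
differences, where every term containing an `η_j` with `j ∉ {2,…,k}` is replaced by `0`. -/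
theorem eta0_solves_gap_system (k : ℕ) (hk : 2 ≤ k) (t : ℝ) (ht : 0 < t)
    (i : ℕ) (hi2 : 2 ≤ i) (hik : i ≤ k) :
    (2 * Real.sqrt 2 / 3) * deriv (eta0 k i) t =
      384 *
        (-2 * (if 2 ≤ i - 1 ∧ i - 1 ≤ k then
              Real.exp (-(2 * Real.sqrt 2) * eta0 k (i - 1) t) else 0)
          + 4 * Real.exp (-(2 * Real.sqrt 2) * eta0 k i t)
          - 2 * (if i + 1 ≤ k then Real.exp (-(2 * Real.sqrt 2) * eta0 k (i + 1) t) else 0)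
          - (if i + 1 ≤ k then
              Real.exp (-(Real.sqrt 2) * (eta0 k i t + eta0 k (i + 1) t)) else 0)
          + (if 2 ≤ i - 2 then
              Real.exp (-(Real.sqrt 2) * (eta0 k (i - 1) t + eta0 k (i - 2) t)) else 0)
          - (if 2 ≤ i - 1 then
              Real.exp (-(Real.sqrt 2) * (eta0 k i t + eta0 k (i - 1) t)) else 0)
          + (if i + 2 ≤ k then
              Real.exp (-(Real.sqrt 2) * (eta0 k (i + 1) t + eta0 k (i + 2) t)) else 0)) := by
  have ht0 : t ≠ 0 := ne_of_gt ht
  have hs0 : Real.sqrt 2 ≠ 0 := by positivity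
  have hL : 2 * Real.sqrt 2 / 3 * deriv (eta0 k i) t = 1 / (3 * t) := by
    rw [eta0_deriv k i t ht]
    field_simp
  have hB1 : (if 2 ≤ i - 1 ∧ i - 1 ≤ k then
      Real.exp (-(2 * Real.sqrt 2) * eta0 k (i - 1) t) else 0)
      = (Cc k (i - 1)) ^ 2 / (1152 * t) := by
    by_cases h : 2 ≤ i - 1 ∧ i - 1 ≤ k
    · rw [if_pos h, exp_eta_sq k (i - 1) t ht h.1 h.2]
    · rw [if_neg h, Cc_eq_zero k (i - 1) h]
      norm_num
  have hB0 : Real.exp (-(2 * Real.sqrt 2) * eta0 k i t) = (Cc k i) ^ 2 / (1152 * t) :=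
    exp_eta_sq k i t ht hi2 hik
  have hB2 : (if i + 1 ≤ k then
      Real.exp (-(2 * Real.sqrt 2) * eta0 k (i + 1) t) else 0)
      = (Cc k (i + 1)) ^ 2 / (1152 * t) := by
    by_cases h : i + 1 ≤ k
    · rw [if_pos h, exp_eta_sq k (i + 1) t ht (by omega) h]
    · rw [if_neg h, Cc_eq_zero k (i + 1) (by omega)]
      norm_num
  have hB3 : (if i + 1 ≤ k then
      Real.exp (-(Real.sqrt 2) * (eta0 k i t + eta0 k (i + 1) t)) else 0)
      = Cc k i * Cc k (i + 1) / (1152 * t) := by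
    by_cases h : i + 1 ≤ k
    · rw [if_pos h, exp_eta_prod k i (i + 1) t ht hi2 hik (by omega) h]
    · rw [if_neg h, Cc_eq_zero k (i + 1) (by omega)]
      norm_num
  have hB4 : (if 2 ≤ i - 2 then
      Real.exp (-(Real.sqrt 2) * (eta0 k (i - 1) t + eta0 k (i - 2) t)) else 0)
      = Cc k (i - 1) * Cc k (i - 2) / (1152 * t) := by
    by_cases h : 2 ≤ i - 2
    · rw [if_pos h, exp_eta_prod k (i - 1) (i - 2) t ht (by omega) (by omega) h (by omega)]
    · rw [if_neg h, Cc_eq_zero k (i - 2) (by omega)]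
      norm_num
  have hB5 : (if 2 ≤ i - 1 then
      Real.exp (-(Real.sqrt 2) * (eta0 k i t + eta0 k (i - 1) t)) else 0)
      = Cc k i * Cc k (i - 1) / (1152 * t) := by
    by_cases h : 2 ≤ i - 1
    · rw [if_pos h, exp_eta_prod k i (i - 1) t ht hi2 hik h (by omega)]
    · rw [if_neg h, Cc_eq_zero k (i - 1) (by omega)]
      norm_num
  have hB6 : (if i + 2 ≤ k then
      Real.exp (-(Real.sqrt 2) * (eta0 k (i + 1) t + eta0 k (i + 2) t)) else 0)
      = Cc k (i + 1) * Cc k (i + 2) / (1152 * t) := by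
    by_cases h : i + 2 ≤ k
    · rw [if_pos h, exp_eta_prod k (i + 1) (i + 2) t ht (by omega) (by omega) (by omega) h]
    · rw [if_neg h, Cc_eq_zero k (i + 2) (by omega)]
      norm_num
  rw [hL, hB1, hB0, hB2, hB3, hB4, hB5, hB6]
  have hK := key_identity k i hi2 hik
  linear_combination (-384 / (1152 * t)) * hK
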